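/- For every integer d ≥ 2 and all reals γ > 0: lim_{κ→0⁺} γ ω_d ∫₀^∞ κ^{−(d−1)/2} sinh^{d−1}(√κ r) · exp( −2γ κ_{d−1} ∫₀^{r/2} κ^{−(d−1)/2} ( cosh²(√κ r)/cosh²(√κ (r−t)) − 1 )^{(d−1)/2} dt ) dr = γ ω_d ∫₀^∞ r^{d−1} exp( −2γ κ_{d−1} β_d r^d ) dr. -/

import Mathlib

open MeasureTheory Real Filter

/-- `ω_k`, the surface area of the (k−1)-dimensional Euclidean unit sphere. -/
noncomputable def omegaS (k : ℕ) : ℝ := 2 * Real.pi ^ ((k : ℝ) / 2) / Real.Gamma ((k : ℝ) / 2)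

/-- `κ_k`, the volume of the k-dimensional Euclidean unit ball. -/
noncomputable def kappaV (k : ℕ) : ℝ := omegaS k / k

/-- `β_d := ∫₀^{1/2} (1 − (1−t)²)^{(d−1)/2} dt`. -/
noncomputable def betaD (d : ℕ) : ℝ :=
  ∫ t in (0:ℝ)..(1 / 2), (1 - (1 - t) ^ 2) ^ (((d : ℝ) - 1) / 2)



lemma self_le_sinh' {x : ℝ} (hx : 0 ≤ x) : x ≤ Real.sinh x := by
  have := Real.sinh_sub_id_strictMono.monotone hx
  simpa using this

lemma sinh_le_mul_cosh {x : ℝ} (hx : 0 ≤ x) : Real.sinh x ≤ x * Real.cosh x := by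
  have key : ∀ y : ℝ, HasDerivAt (fun z => z * Real.cosh z - Real.sinh z)
      (y * Real.sinh y) y := by
    intro y
    have h := ((hasDerivAt_id y).mul (Real.hasDerivAt_cosh y)).sub (Real.hasDerivAt_sinh y)
    refine h.congr_deriv ?_
    simp [id_eq]
    try ring
  have mono : MonotoneOn (fun z => z * Real.cosh z - Real.sinh z) (Set.Ici 0) := by
    apply monotoneOn_of_deriv_nonneg (convex_Ici 0)
    · exact (Continuous.sub (continuous_id.mul Real.continuous_cosh)
        Real.continuous_sinh).continuousOn
    · exact fun y hy => (key y).differentiableAt.differentiableWithinAt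
    · intro y hy
      rw [interior_Ici] at hy
      rw [(key y).deriv]
      exact mul_nonneg (le_of_lt hy) (Real.sinh_nonneg_iff.2 (le_of_lt hy))
  have := mono (Set.self_mem_Ici) (by exact hx) hx
  simpa using this

lemma tanh_mono {x : ℝ} (hx : (1:ℝ)/2 ≤ x) :
    Real.sinh (1/2) * Real.cosh x ≤ Real.sinh x * Real.cosh (1/2) := by
  have h := Real.sinh_nonneg_iff.2 (by linarith : (0:ℝ) ≤ x - 1/2)
  rw [Real.sinh_sub] at h
  linarith

lemma cosh_le_exp {x : ℝ} (hx : 0 ≤ x) : Real.cosh x ≤ Real.exp x := by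
  rw [Real.cosh_eq]
  have h1 : Real.exp (-x) ≤ Real.exp x := Real.exp_le_exp.2 (by linarith)
  linarith



lemma tendsto_sinh_div_self' : Tendsto (fun x : ℝ => Real.sinh x / x) (nhdsWithin 0 {(0:ℝ)}ᶜ) (nhds 1) := by
  have h := (Real.hasDerivAt_sinh 0)
  rw [hasDerivAt_iff_tendsto_slope] at h
  rw [Real.cosh_zero] at h
  refine h.congr (fun x => ?_)
  simp [slope_def_field, Real.sinh_zero]

lemma tendsto_sinh_ratio (c : ℝ) (hc : 0 < c) :
    Tendsto (fun κ : ℝ => Real.sinh (Real.sqrt κ * c) / (Real.sqrt κ * c))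
      (nhdsWithin 0 (Set.Ioi 0)) (nhds 1) := by
  apply tendsto_sinh_div_self'.comp
  rw [tendsto_nhdsWithin_iff]
  constructor
  · have h : Tendsto (fun κ : ℝ => Real.sqrt κ * c) (nhds 0) (nhds (Real.sqrt 0 * c)) :=
      ((Real.continuous_sqrt.tendsto 0).mul_const c)
    rw [Real.sqrt_zero, zero_mul] at h
    exact h.mono_left nhdsWithin_le_nhds
  · filter_upwards [self_mem_nhdsWithin] with κ hκ
    have hs : 0 < Real.sqrt κ := Real.sqrt_pos.2 hκ
    simp only [Set.mem_compl_iff, Set.mem_singleton_iff]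
    exact (mul_pos hs hc).ne'

lemma tendsto_cosh_sqrt (c : ℝ) :
    Tendsto (fun κ : ℝ => Real.cosh (Real.sqrt κ * c)) (nhdsWithin 0 (Set.Ioi 0)) (nhds 1) := by
  have h : Tendsto (fun κ : ℝ => Real.cosh (Real.sqrt κ * c)) (nhds 0)
      (nhds (Real.cosh (Real.sqrt 0 * c))) :=
    (Real.continuous_cosh.comp (Real.continuous_sqrt.mul continuous_const)).tendsto 0
  rw [Real.sqrt_zero, zero_mul, Real.cosh_zero] at h
  exact h.mono_left nhdsWithin_le_nhds

lemma cosh_sq_sub_cosh_sq (a b : ℝ) :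
    Real.cosh a ^ 2 - Real.cosh b ^ 2 = Real.sinh (a + b) * Real.sinh (a - b) := by
  rw [Real.sinh_add, Real.sinh_sub]
  nlinarith [Real.cosh_sq a, Real.cosh_sq b]

lemma inner_eq (p κ r t : ℝ) (hκ : 0 < κ) (ht : 0 ≤ t) (htr : t ≤ 2 * r) :
    κ ^ (-p) * (Real.cosh (Real.sqrt κ * r) ^ 2 / Real.cosh (Real.sqrt κ * (r - t)) ^ 2 - 1) ^ p
      = ((Real.cosh (Real.sqrt κ * r) ^ 2 - Real.cosh (Real.sqrt κ * (r - t)) ^ 2)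
          / (κ * Real.cosh (Real.sqrt κ * (r - t)) ^ 2)) ^ p := by
  have hr0 : 0 ≤ r := by linarith
  have hb := Real.cosh_pos (Real.sqrt κ * (r - t))
  have hb2 : (0:ℝ) < Real.cosh (Real.sqrt κ * (r - t)) ^ 2 := by positivity
  have hX : Real.cosh (Real.sqrt κ * r) ^ 2 / Real.cosh (Real.sqrt κ * (r - t)) ^ 2 - 1
      = (Real.cosh (Real.sqrt κ * r) ^ 2 - Real.cosh (Real.sqrt κ * (r - t)) ^ 2)
          / Real.cosh (Real.sqrt κ * (r - t)) ^ 2 := by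
    field_simp
  have habs : |Real.sqrt κ * (r - t)| ≤ |Real.sqrt κ * r| := by
    rw [abs_mul, abs_mul]
    apply mul_le_mul_of_nonneg_left _ (abs_nonneg _)
    rw [abs_of_nonneg hr0, abs_le]
    constructor <;> linarith
  have hmono : Real.cosh (Real.sqrt κ * (r - t)) ≤ Real.cosh (Real.sqrt κ * r) :=
    Real.cosh_le_cosh.2 habs
  have hXnn : 0 ≤ Real.cosh (Real.sqrt κ * r) ^ 2 - Real.cosh (Real.sqrt κ * (r - t)) ^ 2 := by
    nlinarith [Real.cosh_pos (Real.sqrt κ * r)]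
  rw [hX, Real.rpow_neg hκ.le]
  rw [show (Real.cosh (Real.sqrt κ * r) ^ 2 - Real.cosh (Real.sqrt κ * (r - t)) ^ 2)
      / (κ * Real.cosh (Real.sqrt κ * (r - t)) ^ 2)
      = ((Real.cosh (Real.sqrt κ * r) ^ 2 - Real.cosh (Real.sqrt κ * (r - t)) ^ 2)
          / Real.cosh (Real.sqrt κ * (r - t)) ^ 2) / κ by rw [div_div]; ring_nf]
  rw [Real.div_rpow (div_nonneg hXnn hb2.le) hκ.le]
  rw [inv_mul_eq_div]

lemma inner_tendsto (p r t : ℝ) (hp : 0 ≤ p) (hr : 0 < r) (ht : 0 < t) (htr : t ≤ r / 2) :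
    Tendsto (fun κ : ℝ => κ ^ (-p) *
      (Real.cosh (Real.sqrt κ * r) ^ 2 / Real.cosh (Real.sqrt κ * (r - t)) ^ 2 - 1) ^ p)
      (nhdsWithin 0 (Set.Ioi 0)) (nhds ((r ^ 2 - (r - t) ^ 2) ^ p)) := by
  have h2rt : 0 < 2 * r - t := by linarith
  have hmain : Tendsto (fun κ : ℝ =>
      (Real.sinh (Real.sqrt κ * (2 * r - t)) / (Real.sqrt κ * (2 * r - t))) *
      (Real.sinh (Real.sqrt κ * t) / (Real.sqrt κ * t)) * ((2 * r - t) * t) /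
      Real.cosh (Real.sqrt κ * (r - t)) ^ 2)
      (nhdsWithin 0 (Set.Ioi 0)) (nhds ((2 * r - t) * t)) := by
    have h1 := tendsto_sinh_ratio (2 * r - t) h2rt
    have h2 := tendsto_sinh_ratio t ht
    have h3 := ((tendsto_cosh_sqrt (r - t)).pow 2)
    have h4 := (((h1.mul h2).mul_const ((2 * r - t) * t)).div h3 (by norm_num))
    simpa [Pi.div_def] using h4
  have hcomp := ((Real.continuous_rpow_const hp).tendsto ((2 * r - t) * t)).comp hmain
  have hval : (r ^ 2 - (r - t) ^ 2) = (2 * r - t) * t := by ring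
  rw [hval]
  apply hcomp.congr'
  filter_upwards [self_mem_nhdsWithin] with κ hκ
  simp only [Function.comp_apply]
  rw [inner_eq p κ r t hκ ht.le (by linarith)]
  congr 1
  have hs : 0 < Real.sqrt κ := Real.sqrt_pos.2 hκ
  have hb := Real.cosh_pos (Real.sqrt κ * (r - t))
  rw [cosh_sq_sub_cosh_sq]
  rw [show Real.sqrt κ * r + Real.sqrt κ * (r - t) = Real.sqrt κ * (2 * r - t) by ring]
  rw [show Real.sqrt κ * r - Real.sqrt κ * (r - t) = Real.sqrt κ * t by ring]
  rw [show κ = Real.sqrt κ * Real.sqrt κ from (Real.mul_self_sqrt hκ.le).symm]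
  field_simp
  ring
  rw [Real.sqrt_sq hs.le]



lemma J_eq (d : ℕ) (hd : 2 ≤ d) (r : ℝ) (hr : 0 < r) :
    (∫ t in (0:ℝ)..(r / 2), (r ^ 2 - (r - t) ^ 2) ^ (((d:ℝ) - 1) / 2)) = betaD d * r ^ d := by
  set p : ℝ := ((d:ℝ) - 1) / 2 with hp_def
  have hcast : ((d - 1 : ℕ) : ℝ) = (d : ℝ) - 1 := by
    have : (1:ℕ) ≤ d := by omega
    push_cast [Nat.cast_sub this]
    ring
  have key := intervalIntegral.integral_comp_mul_left
    (fun t => (r ^ 2 - (r - t) ^ 2) ^ p) (ne_of_gt hr) (a := 0) (b := 1/2)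
  rw [mul_zero] at key
  rw [show r * (1/2) = r / 2 by ring] at key
  have step1 : (∫ t in (0:ℝ)..(r / 2), (r ^ 2 - (r - t) ^ 2) ^ p)
      = r * ∫ s in (0:ℝ)..(1/2), (r ^ 2 - (r - r * s) ^ 2) ^ p := by
    rw [key, smul_eq_mul, ← mul_assoc, mul_inv_cancel₀ (ne_of_gt hr), one_mul]
  rw [step1]
  have step2 : (∫ s in (0:ℝ)..(1/2), (r ^ 2 - (r - r * s) ^ 2) ^ p)
      = ∫ s in (0:ℝ)..(1/2), r ^ (d - 1) * (1 - (1 - s) ^ 2) ^ p := by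
    apply intervalIntegral.integral_congr
    intro s hs
    rw [Set.uIcc_of_le (by norm_num : (0:ℝ) ≤ 1/2)] at hs
    obtain ⟨hs0, hs1⟩ := hs
    simp only
    have h1 : r ^ 2 - (r - r * s) ^ 2 = r ^ 2 * (1 - (1 - s) ^ 2) := by ring
    have h2 : (0:ℝ) ≤ 1 - (1 - s) ^ 2 := by nlinarith
    rw [h1, Real.mul_rpow (by positivity) h2]
    congr 1
    rw [← Real.rpow_natCast r 2, ← Real.rpow_mul hr.le]
    rw [show (2:ℕ) * p = ((d:ℝ) - 1) by rw [hp_def]; push_cast; ring]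
    rw [← hcast, Real.rpow_natCast]
  rw [step2, intervalIntegral.integral_const_mul]
  have : r * (r ^ (d - 1) * betaD d) = betaD d * r ^ d := by
    have hd' : (d - 1) + 1 = d := by omega
    calc r * (r ^ (d - 1) * betaD d) = betaD d * (r ^ (d - 1) * r) := by ring
      _ = betaD d * r ^ ((d - 1) + 1) := by rw [pow_succ]
      _ = betaD d * r ^ d := by rw [hd']
  rw [← this, betaD]
set_option maxHeartbeats 1000000 in
lemma I_tendsto (d : ℕ) (hd : 2 ≤ d) (r : ℝ) (hr : 0 < r) :
    Tendsto (fun κ : ℝ => ∫ t in (0:ℝ)..(r / 2),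
        κ ^ (-(((d:ℝ) - 1) / 2)) *
          (Real.cosh (Real.sqrt κ * r) ^ 2 / Real.cosh (Real.sqrt κ * (r - t)) ^ 2 - 1)
            ^ (((d:ℝ) - 1) / 2))
      (nhdsWithin 0 (Set.Ioi 0)) (nhds (betaD d * r ^ d)) := by
  set p : ℝ := ((d:ℝ) - 1) / 2 with hp_def
  have hd2 : (2:ℝ) ≤ (d:ℝ) := by exact_mod_cast hd
  have hp : 0 < p := by rw [hp_def]; linarith
  have h := intervalIntegral.tendsto_integral_filter_of_dominated_convergence
    (μ := volume) (a := (0:ℝ)) (b := r / 2)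
    (F := fun (κ : ℝ) (t : ℝ) => κ ^ (-p) *
      (Real.cosh (Real.sqrt κ * r) ^ 2 / Real.cosh (Real.sqrt κ * (r - t)) ^ 2 - 1) ^ p)
    (f := fun t => (r ^ 2 - (r - t) ^ 2) ^ p)
    (l := nhdsWithin 0 (Set.Ioi 0))
    (bound := fun _ => (r ^ 2 * Real.cosh r ^ 2) ^ p)
    ?_ ?_ ?_ ?_
  · rw [J_eq d hd r hr] at h
    exact h
  · apply Eventually.of_forall
    intro κ
    apply Continuous.aestronglyMeasurable
    apply continuous_const.mul
    apply (Real.continuous_rpow_const hp.le).comp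
    apply Continuous.sub _ continuous_const
    apply Continuous.div continuous_const
    · exact (Real.continuous_cosh.comp (continuous_const.mul (continuous_const.sub
        continuous_id))).pow 2
    · exact fun t => pow_ne_zero 2 (Real.cosh_pos _).ne'
  · filter_upwards [Ioc_mem_nhdsGT_of_mem (Set.mem_Ico.mpr ⟨le_refl (0:ℝ), zero_lt_one⟩)]
      with κ hκ
    obtain ⟨hκ0, hκ1⟩ := hκ
    apply Eventually.of_forall
    intro t ht
    rw [Set.uIoc_of_le (by linarith : (0:ℝ) ≤ r / 2)] at ht
    obtain ⟨ht0, htr⟩ := ht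
    rw [inner_eq p κ r t hκ0 ht0.le (by linarith)]
    have hs : 0 ≤ Real.sqrt κ := Real.sqrt_nonneg κ
    have hsκ : Real.sqrt κ * Real.sqrt κ = κ := Real.mul_self_sqrt hκ0.le
    have hs1 : Real.sqrt κ ≤ 1 := by
      rw [show (1:ℝ) = Real.sqrt 1 by rw [Real.sqrt_one]]
      exact Real.sqrt_le_sqrt hκ1
    have hrt : 0 ≤ r - t := by linarith
    have hnum : 0 ≤ Real.cosh (Real.sqrt κ * r) ^ 2 - Real.cosh (Real.sqrt κ * (r - t)) ^ 2 := by
      rw [cosh_sq_sub_cosh_sq]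
      apply mul_nonneg (Real.sinh_nonneg_iff.2 (by positivity))
      apply Real.sinh_nonneg_iff.2
      have : Real.sqrt κ * r - Real.sqrt κ * (r - t) = Real.sqrt κ * t := by ring
      rw [this]; positivity
    have hbpos := Real.cosh_pos (Real.sqrt κ * (r - t))
    have hdenpos : 0 < κ * Real.cosh (Real.sqrt κ * (r - t)) ^ 2 := by positivity
    have hQnn : 0 ≤ (Real.cosh (Real.sqrt κ * r) ^ 2 - Real.cosh (Real.sqrt κ * (r - t)) ^ 2) /
        (κ * Real.cosh (Real.sqrt κ * (r - t)) ^ 2) := div_nonneg hnum hdenpos.le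
    rw [Real.norm_eq_abs, abs_of_nonneg (Real.rpow_nonneg hQnn p)]
    apply Real.rpow_le_rpow hQnn _ hp.le
    rw [div_le_iff₀ hdenpos]
    have hsinh : Real.sinh (Real.sqrt κ * r) ≤ (Real.sqrt κ * r) * Real.cosh (Real.sqrt κ * r) :=
      sinh_le_mul_cosh (by positivity)
    have hsinh0 : 0 ≤ Real.sinh (Real.sqrt κ * r) := Real.sinh_nonneg_iff.2 (by positivity)
    have hcoshle : Real.cosh (Real.sqrt κ * r) ≤ Real.cosh r := by
      apply Real.cosh_le_cosh.2
      rw [abs_of_nonneg (by positivity : (0:ℝ) ≤ Real.sqrt κ * r), abs_of_nonneg hr.le]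
      nlinarith
    have hone : 1 ≤ Real.cosh (Real.sqrt κ * (r - t)) ^ 2 := by
      have := Real.one_le_cosh (Real.sqrt κ * (r - t))
      nlinarith
    have hnum2 : Real.cosh (Real.sqrt κ * r) ^ 2 - Real.cosh (Real.sqrt κ * (r - t)) ^ 2 ≤
        Real.sinh (Real.sqrt κ * r) ^ 2 := by
      rw [Real.sinh_sq]
      nlinarith
    have hcoshpos := Real.cosh_pos (Real.sqrt κ * r)
    have hcoshrpos := Real.cosh_pos r
    have h1 : Real.sinh (Real.sqrt κ * r) ^ 2 ≤ (Real.sqrt κ * r * Real.cosh (Real.sqrt κ * r)) ^ 2 :=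
      pow_le_pow_left₀ hsinh0 hsinh 2
    have h2 : (Real.sqrt κ * r * Real.cosh (Real.sqrt κ * r)) ^ 2
        = κ * (r ^ 2 * Real.cosh (Real.sqrt κ * r) ^ 2) := by
      rw [mul_pow, mul_pow, Real.sq_sqrt hκ0.le]; ring
    have h3 : Real.cosh (Real.sqrt κ * r) ^ 2 ≤ Real.cosh r ^ 2 :=
      pow_le_pow_left₀ hcoshpos.le hcoshle 2
    calc Real.cosh (Real.sqrt κ * r) ^ 2 - Real.cosh (Real.sqrt κ * (r - t)) ^ 2
        ≤ Real.sinh (Real.sqrt κ * r) ^ 2 := hnum2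
      _ ≤ κ * (r ^ 2 * Real.cosh (Real.sqrt κ * r) ^ 2) := by rw [← h2]; exact h1
      _ ≤ κ * (r ^ 2 * Real.cosh r ^ 2) := by nlinarith [sq_nonneg r]
      _ ≤ r ^ 2 * Real.cosh r ^ 2 * (κ * Real.cosh (Real.sqrt κ * (r - t)) ^ 2) := by
          nlinarith [mul_nonneg (mul_nonneg (sq_nonneg r) (sq_nonneg (Real.cosh r))) hκ0.le]
  · exact intervalIntegrable_const
  · apply Eventually.of_forall
    intro t ht
    rw [Set.uIoc_of_le (by linarith : (0:ℝ) ≤ r / 2)] at ht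
    exact inner_tendsto p r t hp.le hr ht.1 ht.2
lemma cast_sub_one (d : ℕ) (hd : 2 ≤ d) : ((d - 1 : ℕ) : ℝ) = (d : ℝ) - 1 := by
  have h : (1:ℕ) ≤ d := by omega
  push_cast [Nat.cast_sub h]
  ring

lemma sq_rpow_eq (d : ℕ) (hd : 2 ≤ d) (x : ℝ) (hx : 0 ≤ x) :
    (x ^ 2) ^ (((d:ℝ) - 1) / 2) = x ^ (d - 1) := by
  rw [← Real.rpow_natCast x 2, ← Real.rpow_mul hx]
  rw [show ((2:ℕ):ℝ) * (((d:ℝ) - 1) / 2) = ((d - 1 : ℕ) : ℝ) by rw [cast_sub_one d hd]; push_cast; ring]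
  exact Real.rpow_natCast x (d - 1)

lemma betaD_pos (d : ℕ) (hd : 2 ≤ d) : 0 < betaD d := by
  have hp : (0:ℝ) ≤ ((d:ℝ) - 1) / 2 := by
    have : (2:ℝ) ≤ (d:ℝ) := by exact_mod_cast hd
    linarith
  apply intervalIntegral.intervalIntegral_pos_of_pos_on
  · apply Continuous.intervalIntegrable
    exact (Real.continuous_rpow_const hp).comp
      (continuous_const.sub ((continuous_const.sub continuous_id).pow 2))
  · intro x hx
    obtain ⟨hx0, hx1⟩ := hx
    apply Real.rpow_pos_of_pos
    nlinarith
  · norm_num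

lemma I_lower_small (d : ℕ) (hd : 2 ≤ d) (κ r : ℝ) (hκ : 0 < κ) (hr : 0 < r)
    (ha : Real.sqrt κ * r ≤ 1) :
    betaD d * r ^ d / Real.cosh 1 ^ (d - 1) ≤
      ∫ t in (0:ℝ)..(r / 2), κ ^ (-(((d:ℝ) - 1) / 2)) *
        (Real.cosh (Real.sqrt κ * r) ^ 2 / Real.cosh (Real.sqrt κ * (r - t)) ^ 2 - 1)
          ^ (((d:ℝ) - 1) / 2) := by
  set p : ℝ := ((d:ℝ) - 1) / 2 with hp_def
  have hd2 : (2:ℝ) ≤ (d:ℝ) := by exact_mod_cast hd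
  have hp : 0 < p := by rw [hp_def]; linarith
  have hcosh1 := Real.cosh_pos 1
  -- the comparison integrand
  have hstep1 : (∫ t in (0:ℝ)..(r / 2), ((r ^ 2 - (r - t) ^ 2) / Real.cosh 1 ^ 2) ^ p)
      = betaD d * r ^ d / Real.cosh 1 ^ (d - 1) := by
    have hcongr : (∫ t in (0:ℝ)..(r / 2), ((r ^ 2 - (r - t) ^ 2) / Real.cosh 1 ^ 2) ^ p)
        = ∫ t in (0:ℝ)..(r / 2), (r ^ 2 - (r - t) ^ 2) ^ p / (Real.cosh 1 ^ 2) ^ p := by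
      apply intervalIntegral.integral_congr
      intro t ht
      rw [Set.uIcc_of_le (by linarith : (0:ℝ) ≤ r / 2)] at ht
      obtain ⟨ht0, htr⟩ := ht
      simp only
      rw [Real.div_rpow (by nlinarith) (by positivity)]
    rw [hcongr, intervalIntegral.integral_div, J_eq d hd r hr, sq_rpow_eq d hd _ hcosh1.le]
  rw [← hstep1]
  apply intervalIntegral.integral_mono_on (by linarith : (0:ℝ) ≤ r / 2)
  · apply Continuous.intervalIntegrable
    exact (Real.continuous_rpow_const hp.le).comp
      ((continuous_const.sub ((continuous_const.sub continuous_id).pow 2)).div_const _)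
  · apply Continuous.intervalIntegrable
    apply continuous_const.mul
    apply (Real.continuous_rpow_const hp.le).comp
    apply Continuous.sub _ continuous_const
    apply Continuous.div continuous_const
    · exact (Real.continuous_cosh.comp (continuous_const.mul (continuous_const.sub
        continuous_id))).pow 2
    · exact fun t => pow_ne_zero 2 (Real.cosh_pos _).ne'
  · intro t ht
    obtain ⟨ht0, htr⟩ := ht
    rw [inner_eq p κ r t hκ ht0 (by linarith)]
    have hs : 0 ≤ Real.sqrt κ := Real.sqrt_nonneg κ
    have hsκ : Real.sqrt κ * Real.sqrt κ = κ := Real.mul_self_sqrt hκ.le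
    have hbpos := Real.cosh_pos (Real.sqrt κ * (r - t))
    have hdenpos : 0 < κ * Real.cosh (Real.sqrt κ * (r - t)) ^ 2 := by positivity
    apply Real.rpow_le_rpow (div_nonneg (by nlinarith) (by positivity)) _ hp.le
    -- base inequality
    have hb1 : Real.cosh (Real.sqrt κ * (r - t)) ≤ Real.cosh 1 := by
      apply Real.cosh_le_cosh.2
      rw [abs_of_nonneg (mul_nonneg hs (by linarith)), abs_one]
      nlinarith
    have hnum : κ * (r ^ 2 - (r - t) ^ 2) ≤
        Real.cosh (Real.sqrt κ * r) ^ 2 - Real.cosh (Real.sqrt κ * (r - t)) ^ 2 := by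
      rw [cosh_sq_sub_cosh_sq]
      have e1 : Real.sqrt κ * r - Real.sqrt κ * (r - t) = Real.sqrt κ * t := by ring
      rw [e1]
      have h1 : Real.sqrt κ * r + Real.sqrt κ * (r - t) ≤
          Real.sinh (Real.sqrt κ * r + Real.sqrt κ * (r - t)) :=
        self_le_sinh' (by nlinarith [mul_nonneg hs hr.le, mul_nonneg hs (by linarith : (0:ℝ) ≤ r - t)])
      have h2 : Real.sqrt κ * t ≤ Real.sinh (Real.sqrt κ * t) := self_le_sinh' (by positivity)
      have h3 : (0:ℝ) ≤ Real.sqrt κ * t := mul_nonneg hs ht0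
      have h4 : (0:ℝ) ≤ Real.sqrt κ * r + Real.sqrt κ * (r - t) := by
        nlinarith [mul_nonneg hs hr.le, mul_nonneg hs (by linarith : (0:ℝ) ≤ r - t)]
      calc κ * (r ^ 2 - (r - t) ^ 2)
          = (Real.sqrt κ * r + Real.sqrt κ * (r - t)) * (Real.sqrt κ * t) := by
            rw [show (Real.sqrt κ * r + Real.sqrt κ * (r - t)) * (Real.sqrt κ * t)
              = (Real.sqrt κ * Real.sqrt κ) * ((2 * r - t) * t) by ring, hsκ]; ring
        _ ≤ Real.sinh (Real.sqrt κ * r + Real.sqrt κ * (r - t)) * Real.sinh (Real.sqrt κ * t) :=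
            mul_le_mul h1 h2 h3 (le_trans h4 h1)
    calc (r ^ 2 - (r - t) ^ 2) / Real.cosh 1 ^ 2
        = κ * (r ^ 2 - (r - t) ^ 2) / (κ * Real.cosh 1 ^ 2) := by
          rw [mul_div_mul_left _ _ (ne_of_gt hκ)]
      _ ≤ (Real.cosh (Real.sqrt κ * r) ^ 2 - Real.cosh (Real.sqrt κ * (r - t)) ^ 2) /
            (κ * Real.cosh (Real.sqrt κ * (r - t)) ^ 2) := by
          have hbb : Real.cosh (Real.sqrt κ * (r - t)) ^ 2 ≤ Real.cosh 1 ^ 2 := by nlinarith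
          apply div_le_div₀ (le_trans (by nlinarith [mul_nonneg (mul_nonneg hκ.le (by linarith : (0:ℝ) ≤ 2*r - t)) ht0]) hnum) hnum hdenpos
          exact mul_le_mul_of_nonneg_left hbb hκ.le
noncomputable def Kc : ℝ := 2 * Real.sinh (1/2) / Real.cosh (1/2)

lemma Kc_pos : 0 < Kc := by
  unfold Kc
  have h1 : 0 < Real.sinh (1/2) := Real.sinh_pos_iff.2 (by norm_num)
  have h2 := Real.cosh_pos (1/2 : ℝ)
  positivity

noncomputable def C1 (d : ℕ) : ℝ :=
  Kc ^ (((d:ℝ) - 1) / 2) * (1/2 : ℝ) ^ (((d:ℝ) + 1) / 2) / (((d:ℝ) + 1) / 2)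

lemma C1_pos (d : ℕ) (hd : 2 ≤ d) : 0 < C1 d := by
  unfold C1
  have hd2 : (2:ℝ) ≤ (d:ℝ) := by exact_mod_cast hd
  have h1 : (0:ℝ) < Kc ^ (((d:ℝ) - 1) / 2) := Real.rpow_pos_of_pos Kc_pos _
  have h2 : (0:ℝ) < (1/2 : ℝ) ^ (((d:ℝ) + 1) / 2) := Real.rpow_pos_of_pos (by norm_num) _
  have h3 : (0:ℝ) < ((d:ℝ) + 1) / 2 := by linarith
  positivity

lemma int_Kt (d : ℕ) (hd : 2 ≤ d) (r : ℝ) (hr : 0 < r) :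
    (∫ t in (0:ℝ)..(r / 2), (Kc * t) ^ (((d:ℝ) - 1) / 2))
      = C1 d * r ^ (((d:ℝ) + 1) / 2) := by
  set p : ℝ := ((d:ℝ) - 1) / 2 with hp_def
  have hd2 : (2:ℝ) ≤ (d:ℝ) := by exact_mod_cast hd
  have hp : 0 < p := by rw [hp_def]; linarith
  have hcongr : (∫ t in (0:ℝ)..(r / 2), (Kc * t) ^ p)
      = ∫ t in (0:ℝ)..(r / 2), Kc ^ p * t ^ p := by
    apply intervalIntegral.integral_congr
    intro t ht
    rw [Set.uIcc_of_le (by linarith : (0:ℝ) ≤ r / 2)] at ht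
    simp only
    rw [Real.mul_rpow Kc_pos.le ht.1]
  rw [hcongr, intervalIntegral.integral_const_mul, integral_rpow (Or.inl (by linarith : (-1:ℝ) < p))]
  rw [Real.zero_rpow (by linarith : p + 1 ≠ 0)]
  have hhalf : (r / 2 : ℝ) = r * (1/2) := by ring
  rw [hhalf, Real.mul_rpow hr.le (by norm_num : (0:ℝ) ≤ (1/2:ℝ))]
  have hpe : p + 1 = ((d:ℝ) + 1) / 2 := by rw [hp_def]; ring
  rw [hpe]
  unfold C1
  rw [← hp_def]
  field_simp
  ring
lemma I_lower_big (d : ℕ) (hd : 2 ≤ d) (κ r : ℝ) (hκ : 0 < κ) (hκ1 : κ ≤ 1) (hr : 0 < r)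
    (ha : 1 ≤ Real.sqrt κ * r) :
    C1 d * r ^ (((d:ℝ) + 1) / 2) ≤
      ∫ t in (0:ℝ)..(r / 2), κ ^ (-(((d:ℝ) - 1) / 2)) *
        (Real.cosh (Real.sqrt κ * r) ^ 2 / Real.cosh (Real.sqrt κ * (r - t)) ^ 2 - 1)
          ^ (((d:ℝ) - 1) / 2) := by
  set p : ℝ := ((d:ℝ) - 1) / 2 with hp_def
  have hd2 : (2:ℝ) ≤ (d:ℝ) := by exact_mod_cast hd
  have hp : 0 < p := by rw [hp_def]; linarith
  rw [← int_Kt d hd r hr, ← hp_def]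
  apply intervalIntegral.integral_mono_on (by linarith : (0:ℝ) ≤ r / 2)
  · apply Continuous.intervalIntegrable
    exact (Real.continuous_rpow_const hp.le).comp (continuous_const.mul continuous_id)
  · apply Continuous.intervalIntegrable
    apply continuous_const.mul
    apply (Real.continuous_rpow_const hp.le).comp
    apply Continuous.sub _ continuous_const
    apply Continuous.div continuous_const
    · exact (Real.continuous_cosh.comp (continuous_const.mul (continuous_const.sub
        continuous_id))).pow 2
    · exact fun t => pow_ne_zero 2 (Real.cosh_pos _).ne'
  · intro t ht
    obtain ⟨ht0, htr⟩ := ht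
    rw [inner_eq p κ r t hκ ht0 (by linarith)]
    have hs0 : 0 ≤ Real.sqrt κ := Real.sqrt_nonneg κ
    have hsκ : Real.sqrt κ * Real.sqrt κ = κ := Real.mul_self_sqrt hκ.le
    have hs1 : Real.sqrt κ ≤ 1 := by
      rw [show (1:ℝ) = Real.sqrt 1 by rw [Real.sqrt_one]]
      exact Real.sqrt_le_sqrt hκ1
    set a := Real.sqrt κ * r with ha_def
    set b := Real.sqrt κ * (r - t) with hb_def
    have hbpos := Real.cosh_pos b
    have hdenpos : 0 < κ * Real.cosh b ^ 2 := by positivity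
    apply Real.rpow_le_rpow (mul_nonneg Kc_pos.le ht0) _ hp.le
    rw [le_div_iff₀ hdenpos]
    -- key chain
    have hab : b ≤ a := by
      rw [ha_def, hb_def]
      apply mul_le_mul_of_nonneg_left (by linarith) hs0
    have hb12 : (1:ℝ)/2 ≤ b := by
      rw [hb_def]
      calc (1:ℝ)/2 ≤ (Real.sqrt κ * r) / 2 := by linarith
        _ ≤ Real.sqrt κ * (r - t) := by
            rw [div_le_iff₀ (by norm_num : (0:ℝ) < 2)]
            nlinarith [mul_nonneg hs0 (by linarith : (0:ℝ) ≤ r - 2*t + (r - 2*t))]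
    set u := Real.sqrt κ * t with hu_def
    have hu0 : 0 ≤ u := mul_nonneg hs0 ht0
    have hsinhu : u ≤ Real.sinh u := self_le_sinh' hu0
    have hsinhu0 : 0 ≤ Real.sinh u := Real.sinh_nonneg_iff.2 hu0
    have hsinh2b : Real.sinh (2 * b) ≤ Real.sinh (a + b) := Real.sinh_le_sinh.2 (by linarith)
    have hsinh2b0 : 0 ≤ Real.sinh (2 * b) := Real.sinh_nonneg_iff.2 (by linarith)
    have htanh : Real.sinh (1/2) * Real.cosh b ≤ Real.sinh b * Real.cosh (1/2) := tanh_mono hb12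
    have hnum : Real.cosh a ^ 2 - Real.cosh b ^ 2 = Real.sinh (a + b) * Real.sinh (a - b) :=
      cosh_sq_sub_cosh_sq a b
    have hamb : a - b = u := by rw [ha_def, hb_def, hu_def]; ring
    rw [hnum, hamb]
    have hch := Real.cosh_pos (1/2 : ℝ)
    have hsh : 0 < Real.sinh (1/2 : ℝ) := Real.sinh_pos_iff.2 (by norm_num)
    -- sinh(a+b) * sinh u ≥ sinh(2b) * u
    have step1 : Real.sinh (2 * b) * u ≤ Real.sinh (a + b) * Real.sinh u :=
      mul_le_mul hsinh2b hsinhu hu0 (le_trans hsinh2b0 hsinh2b)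
    have step2 : Real.sinh (2 * b) = 2 * Real.sinh b * Real.cosh b := Real.sinh_two_mul b
    -- κ ≤ √κ
    have hκs : κ ≤ Real.sqrt κ := by nlinarith
    -- final: Kc * t * (κ * cosh b ^ 2) ≤ sinh(a+b) * sinh u
    rw [Kc]
    rw [div_mul_eq_mul_div, div_mul_eq_mul_div, div_le_iff₀ hch]
    -- goal : 2 * sinh(1/2) * t * (κ * cosh b ^ 2) ≤ sinh(a+b) * sinh u * cosh(1/2)
    have c1 : 2 * Real.sinh (1/2) * t * (κ * Real.cosh b ^ 2)
        ≤ 2 * Real.sinh (1/2) * t * (Real.sqrt κ * Real.cosh b ^ 2) := by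
      apply mul_le_mul_of_nonneg_left _ (by positivity)
      exact mul_le_mul_of_nonneg_right hκs (by positivity)
    have c2 : 2 * Real.sinh (1/2) * t * (Real.sqrt κ * Real.cosh b ^ 2)
        = 2 * (Real.sinh (1/2) * Real.cosh b) * Real.cosh b * u := by
      rw [hu_def]; ring
    have c3 : 2 * (Real.sinh (1/2) * Real.cosh b) * Real.cosh b * u
        ≤ 2 * (Real.sinh b * Real.cosh (1/2)) * Real.cosh b * u := by
      apply mul_le_mul_of_nonneg_right _ hu0
      apply mul_le_mul_of_nonneg_right _ hbpos.le
      apply mul_le_mul_of_nonneg_left htanh (by norm_num)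
    have c4 : 2 * (Real.sinh b * Real.cosh (1/2)) * Real.cosh b * u
        = (Real.sinh (2 * b) * u) * Real.cosh (1/2) := by
      rw [step2]; ring
    have c5 : (Real.sinh (2 * b) * u) * Real.cosh (1/2)
        ≤ (Real.sinh (a + b) * Real.sinh u) * Real.cosh (1/2) :=
      mul_le_mul_of_nonneg_right step1 hch.le
    calc 2 * Real.sinh (1/2) * t * (κ * Real.cosh b ^ 2)
        ≤ 2 * (Real.sinh (1/2) * Real.cosh b) * Real.cosh b * u := by rw [← c2]; exact c1
      _ ≤ 2 * (Real.sinh b * Real.cosh (1/2)) * Real.cosh b * u := c3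
      _ = (Real.sinh (2 * b) * u) * Real.cosh (1/2) := c4
      _ ≤ Real.sinh (a + b) * Real.sinh u * Real.cosh (1/2) := c5
lemma kappa_pow_eq (d : ℕ) (hd : 2 ≤ d) (κ : ℝ) (hκ : 0 < κ) :
    κ ^ (-(((d:ℝ) - 1) / 2)) = (Real.sqrt κ ^ (d - 1))⁻¹ := by
  conv_lhs => rw [show κ = Real.sqrt κ ^ 2 from (Real.sq_sqrt hκ.le).symm]
  rw [← Real.rpow_natCast (Real.sqrt κ) 2, ← Real.rpow_mul (Real.sqrt_nonneg κ)]
  rw [show ((2:ℕ):ℝ) * (-(((d:ℝ) - 1) / 2)) = -(((d - 1:ℕ):ℝ)) by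
    rw [cast_sub_one d hd]; push_cast; ring]
  rw [Real.rpow_neg (Real.sqrt_nonneg κ), Real.rpow_natCast]

lemma F_tendsto (d : ℕ) (hd : 2 ≤ d) (r : ℝ) (hr : 0 < r) (c₀ : ℝ) :
    Tendsto (fun κ : ℝ => κ ^ (-(((d:ℝ) - 1) / 2)) * Real.sinh (Real.sqrt κ * r) ^ (d - 1) *
        Real.exp (c₀ * ∫ t in (0:ℝ)..(r / 2), κ ^ (-(((d:ℝ) - 1) / 2)) *
          (Real.cosh (Real.sqrt κ * r) ^ 2 / Real.cosh (Real.sqrt κ * (r - t)) ^ 2 - 1)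
            ^ (((d:ℝ) - 1) / 2)))
      (nhdsWithin 0 (Set.Ioi 0))
      (nhds (r ^ (d - 1) * Real.exp (c₀ * (betaD d * r ^ d)))) := by
  have hA : Tendsto (fun κ : ℝ => (Real.sinh (Real.sqrt κ * r) / Real.sqrt κ) ^ (d - 1))
      (nhdsWithin 0 (Set.Ioi 0)) (nhds (r ^ (d - 1))) := by
    apply Tendsto.pow
    have h1 := (tendsto_sinh_ratio r hr).mul_const r
    rw [one_mul] at h1
    apply h1.congr'
    filter_upwards [self_mem_nhdsWithin] with κ hκ
    have hs : 0 < Real.sqrt κ := Real.sqrt_pos.2 hκ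
    field_simp
  have hB : Tendsto (fun κ : ℝ => Real.exp (c₀ * ∫ t in (0:ℝ)..(r / 2),
      κ ^ (-(((d:ℝ) - 1) / 2)) *
        (Real.cosh (Real.sqrt κ * r) ^ 2 / Real.cosh (Real.sqrt κ * (r - t)) ^ 2 - 1)
          ^ (((d:ℝ) - 1) / 2)))
      (nhdsWithin 0 (Set.Ioi 0)) (nhds (Real.exp (c₀ * (betaD d * r ^ d)))) := by
    have h2 := (I_tendsto d hd r hr).const_mul c₀
    exact (Real.continuous_exp.tendsto _).comp h2
  have hAB := hA.mul hB
  apply hAB.congr'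
  filter_upwards [self_mem_nhdsWithin] with κ hκ
  have hs : 0 < Real.sqrt κ := Real.sqrt_pos.2 hκ
  congr 1
  rw [div_pow, kappa_pow_eq d hd κ hκ, div_eq_mul_inv, mul_comm]
noncomputable def Gbound (d : ℕ) (c : ℝ) (r : ℝ) : ℝ :=
  r ^ (d - 1) * Real.cosh 1 ^ (d - 1) *
      Real.exp (-(c * betaD d / Real.cosh 1 ^ (d - 1)) * r ^ d)
    + r ^ (d - 1) * Real.exp (((d:ℝ) - 1) * r - c * C1 d * r ^ (((d:ℝ) + 1) / 2))

set_option maxHeartbeats 1000000 in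
lemma F_le_Gbound (d : ℕ) (hd : 2 ≤ d) (c : ℝ) (hc : 0 < c) (κ : ℝ) (hκ : 0 < κ) (hκ1 : κ ≤ 1)
    (r : ℝ) (hr : 0 < r) :
    ‖κ ^ (-(((d:ℝ) - 1) / 2)) * Real.sinh (Real.sqrt κ * r) ^ (d - 1) *
        Real.exp (-c * ∫ t in (0:ℝ)..(r / 2), κ ^ (-(((d:ℝ) - 1) / 2)) *
          (Real.cosh (Real.sqrt κ * r) ^ 2 / Real.cosh (Real.sqrt κ * (r - t)) ^ 2 - 1)
            ^ (((d:ℝ) - 1) / 2))‖ ≤ Gbound d c r := by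
  set p : ℝ := ((d:ℝ) - 1) / 2 with hp_def
  have hd2 : (2:ℝ) ≤ (d:ℝ) := by exact_mod_cast hd
  set I := ∫ t in (0:ℝ)..(r / 2), κ ^ (-p) *
    (Real.cosh (Real.sqrt κ * r) ^ 2 / Real.cosh (Real.sqrt κ * (r - t)) ^ 2 - 1) ^ p with hI_def
  have hs : 0 < Real.sqrt κ := Real.sqrt_pos.2 hκ
  have hsinh0 : 0 ≤ Real.sinh (Real.sqrt κ * r) :=
    Real.sinh_nonneg_iff.2 (by positivity)
  have hS0 : 0 ≤ κ ^ (-p) * Real.sinh (Real.sqrt κ * r) ^ (d - 1) :=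
    mul_nonneg (Real.rpow_nonneg hκ.le _) (pow_nonneg hsinh0 _)
  rw [Real.norm_eq_abs, abs_of_nonneg (mul_nonneg hS0 (Real.exp_pos _).le)]
  -- bound on the sinh part
  have hcoshapos := Real.cosh_pos (Real.sqrt κ * r)
  have hSle : κ ^ (-p) * Real.sinh (Real.sqrt κ * r) ^ (d - 1) ≤
      (r * Real.cosh (Real.sqrt κ * r)) ^ (d - 1) := by
    rw [hp_def, kappa_pow_eq d hd κ hκ, mul_comm, ← div_eq_mul_inv, ← div_pow]
    apply pow_le_pow_left₀ (div_nonneg hsinh0 hs.le)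
    rw [div_le_iff₀ hs]
    have := sinh_le_mul_cosh (le_of_lt (mul_pos hs hr) : (0:ℝ) ≤ Real.sqrt κ * r)
    nlinarith
  have hβ := betaD_pos d hd
  have hC1 := C1_pos d hd
  have hG2nn : 0 ≤ r ^ (d - 1) * Real.exp (((d:ℝ) - 1) * r - c * C1 d * r ^ (((d:ℝ) + 1) / 2)) :=
    mul_nonneg (pow_nonneg hr.le _) (Real.exp_pos _).le
  have hG1nn : 0 ≤ r ^ (d - 1) * Real.cosh 1 ^ (d - 1) *
      Real.exp (-(c * betaD d / Real.cosh 1 ^ (d - 1)) * r ^ d) := by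
    have := Real.cosh_pos (1:ℝ)
    positivity
  rcases le_or_gt (Real.sqrt κ * r) 1 with hsmall | hbig
  · -- small case
    have hI_low := I_lower_small d hd κ r hκ hr hsmall
    rw [← hp_def] at hI_low
    have hexp : Real.exp (-c * I) ≤
        Real.exp (-(c * betaD d / Real.cosh 1 ^ (d - 1)) * r ^ d) := by
      apply Real.exp_le_exp.2
      have h1 : c * (betaD d * r ^ d / Real.cosh 1 ^ (d - 1)) ≤ c * I :=
        mul_le_mul_of_nonneg_left hI_low hc.le
      have h2 : c * (betaD d * r ^ d / Real.cosh 1 ^ (d - 1))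
          = c * betaD d / Real.cosh 1 ^ (d - 1) * r ^ d := by ring
      linarith
    have hcosha : Real.cosh (Real.sqrt κ * r) ≤ Real.cosh 1 := by
      apply Real.cosh_le_cosh.2
      rw [abs_of_nonneg (by positivity : (0:ℝ) ≤ Real.sqrt κ * r), abs_one]
      exact hsmall
    have hSle2 : κ ^ (-p) * Real.sinh (Real.sqrt κ * r) ^ (d - 1) ≤
        r ^ (d - 1) * Real.cosh 1 ^ (d - 1) := by
      refine le_trans hSle ?_
      rw [← mul_pow]
      apply pow_le_pow_left₀ (by positivity)
      exact mul_le_mul_of_nonneg_left hcosha hr.le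
    have hmul := mul_le_mul hSle2 hexp (Real.exp_pos _).le
      (by positivity : (0:ℝ) ≤ r ^ (d - 1) * Real.cosh 1 ^ (d - 1))
    unfold Gbound
    exact le_trans hmul (le_add_of_nonneg_right hG2nn)
  · -- big case
    have hI_low := I_lower_big d hd κ r hκ hκ1 hr hbig.le
    rw [← hp_def] at hI_low
    have hexp : Real.exp (-c * I) ≤ Real.exp (-(c * C1 d) * r ^ (((d:ℝ) + 1) / 2)) := by
      apply Real.exp_le_exp.2
      have h1 : c * (C1 d * r ^ (((d:ℝ) + 1) / 2)) ≤ c * I :=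
        mul_le_mul_of_nonneg_left hI_low hc.le
      nlinarith
    have hs1 : Real.sqrt κ ≤ 1 := by
      rw [show (1:ℝ) = Real.sqrt 1 by rw [Real.sqrt_one]]
      exact Real.sqrt_le_sqrt hκ1
    have hcosha : Real.cosh (Real.sqrt κ * r) ≤ Real.exp r := by
      refine le_trans (cosh_le_exp (by positivity)) ?_
      apply Real.exp_le_exp.2
      nlinarith
    have hSle3 : κ ^ (-p) * Real.sinh (Real.sqrt κ * r) ^ (d - 1) ≤
        r ^ (d - 1) * Real.exp (((d:ℝ) - 1) * r) := by
      refine le_trans hSle ?_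
      have e1 : r ^ (d - 1) * Real.exp (((d:ℝ) - 1) * r) = (r * Real.exp r) ^ (d - 1) := by
        rw [mul_pow, ← Real.exp_nat_mul, cast_sub_one d hd]
      rw [e1]
      apply pow_le_pow_left₀ (by positivity)
      exact mul_le_mul_of_nonneg_left hcosha hr.le
    have hmul := mul_le_mul hSle3 hexp (Real.exp_pos _).le
      (by positivity : (0:ℝ) ≤ r ^ (d - 1) * Real.exp (((d:ℝ) - 1) * r))
    unfold Gbound
    have heq : r ^ (d - 1) * Real.exp (((d:ℝ) - 1) * r) *
        Real.exp (-(c * C1 d) * r ^ (((d:ℝ) + 1) / 2))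
        = r ^ (d - 1) * Real.exp (((d:ℝ) - 1) * r - c * C1 d * r ^ (((d:ℝ) + 1) / 2)) := by
      rw [mul_assoc, ← Real.exp_add]
      congr 2
      ring
    rw [heq] at hmul
    exact le_trans hmul (le_add_of_nonneg_left hG1nn)
lemma linear_le_rpow (d : ℕ) (hd : 2 ≤ d) (A : ℝ) (hA : 0 < A) :
    ∃ B : ℝ, 0 ≤ B ∧ ∀ r : ℝ, 0 < r → (d:ℝ) * r ≤ A * r ^ (((d:ℝ) + 1) / 2) + B := by
  have hd2 : (2:ℝ) ≤ (d:ℝ) := by exact_mod_cast hd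
  set R : ℝ := max 1 (((d:ℝ) / A) ^ 2) with hR_def
  have hR1 : (1:ℝ) ≤ R := le_max_left _ _
  refine ⟨(d:ℝ) * R, by positivity, fun r hr => ?_⟩
  rcases le_total r R with h | h
  · have h1 : (d:ℝ) * r ≤ (d:ℝ) * R := mul_le_mul_of_nonneg_left h (by positivity)
    have h2 : 0 ≤ A * r ^ (((d:ℝ) + 1) / 2) := mul_nonneg hA.le (Real.rpow_nonneg hr.le _)
    linarith
  · have hr1 : (1:ℝ) ≤ r := le_trans hR1 h
    have h1 : r ^ ((3:ℝ) / 2) ≤ r ^ (((d:ℝ) + 1) / 2) :=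
      Real.rpow_le_rpow_of_exponent_le hr1 (by linarith)
    have h2 : r ^ ((3:ℝ) / 2) = r * Real.sqrt r := by
      rw [show (3:ℝ)/2 = 1 + 1/2 by norm_num, Real.rpow_add hr, Real.rpow_one,
        Real.sqrt_eq_rpow]
    have h3 : (d:ℝ) / A ≤ Real.sqrt r := by
      calc (d:ℝ) / A = Real.sqrt (((d:ℝ) / A) ^ 2) := (Real.sqrt_sq (by positivity)).symm
        _ ≤ Real.sqrt R := Real.sqrt_le_sqrt (le_max_right _ _)
        _ ≤ Real.sqrt r := Real.sqrt_le_sqrt h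
    have h4 : (d:ℝ) * r ≤ A * (r * Real.sqrt r) := by
      rw [show A * (r * Real.sqrt r) = (A * Real.sqrt r) * r by ring]
      apply mul_le_mul_of_nonneg_right _ hr.le
      rw [← div_le_iff₀' hA] at *
      linarith [h3]
    have h5 : A * (r * Real.sqrt r) ≤ A * r ^ (((d:ℝ) + 1) / 2) := by
      rw [← h2]
      exact mul_le_mul_of_nonneg_left h1 hA.le
    have h6 : (0:ℝ) ≤ (d:ℝ) * R := by positivity
    linarith

lemma Gbound_integrable (d : ℕ) (hd : 2 ≤ d) (c : ℝ) (hc : 0 < c) :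
    IntegrableOn (Gbound d c) (Set.Ioi 0) volume := by
  have hd2 : (2:ℝ) ≤ (d:ℝ) := by exact_mod_cast hd
  have hch := Real.cosh_pos (1:ℝ)
  have hβ := betaD_pos d hd
  have hC1 := C1_pos d hd
  have hcast := cast_sub_one d hd
  apply Integrable.add
  · -- first term
    have hb : 0 < c * betaD d / Real.cosh 1 ^ (d - 1) := by positivity
    have base := integrableOn_rpow_mul_exp_neg_mul_rpow
      (by linarith : (-1:ℝ) < (d:ℝ) - 1) (by linarith : (0:ℝ) < (d:ℝ)) hb
    have base2 := base.const_mul (Real.cosh 1 ^ (d - 1))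
    refine IntegrableOn.congr_fun base2 (fun x hx => ?_) measurableSet_Ioi
    have hx0 : 0 < x := hx
    show Real.cosh 1 ^ (d-1) * (x ^ ((d:ℝ) - 1) * Real.exp (-(c * betaD d / Real.cosh 1 ^ (d - 1)) * x ^ ((d:ℝ)))) = _
    rw [← hcast, Real.rpow_natCast, Real.rpow_natCast]
    ring
  · -- second term
    obtain ⟨B, hB0, hB⟩ := linear_le_rpow d hd (c * C1 d) (by positivity)
    have base := integrableOn_rpow_mul_exp_neg_mul_rpow
      (by linarith : (-1:ℝ) < (d:ℝ) - 1) (zero_lt_one (α := ℝ)) (zero_lt_one (α := ℝ))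
    have base2 := base.const_mul (Real.exp B)
    apply Integrable.mono base2
    · apply Continuous.aestronglyMeasurable
      apply (continuous_pow (d-1)).mul
      apply Real.continuous_exp.comp
      apply Continuous.sub (continuous_const.mul continuous_id)
      exact continuous_const.mul (Real.continuous_rpow_const (by linarith))
    · rw [ae_restrict_iff' measurableSet_Ioi]
      apply Eventually.of_forall
      intro r hr
      have hr0 : (0:ℝ) < r := hr
      have hterm : (0:ℝ) ≤ r ^ (d - 1) *
          Real.exp (((d:ℝ) - 1) * r - c * C1 d * r ^ (((d:ℝ) + 1) / 2)) := by positivity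
      rw [Real.norm_eq_abs, abs_of_nonneg hterm, Real.norm_eq_abs]
      have hmaj : Real.exp B * (r ^ ((d:ℝ) - 1) * Real.exp (-1 * r ^ (1:ℝ)))
          = Real.exp B * (r ^ (d - 1) * Real.exp (-r)) := by
        rw [← hcast, Real.rpow_natCast, Real.rpow_one]
        ring_nf
      rw [hmaj, abs_of_nonneg (by positivity)]
      have hexp : Real.exp (((d:ℝ) - 1) * r - c * C1 d * r ^ (((d:ℝ) + 1) / 2))
          ≤ Real.exp (B - r) := by
        apply Real.exp_le_exp.2
        have := hB r hr0
        linarith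
      calc r ^ (d - 1) * Real.exp (((d:ℝ) - 1) * r - c * C1 d * r ^ (((d:ℝ) + 1) / 2))
          ≤ r ^ (d - 1) * Real.exp (B - r) :=
            mul_le_mul_of_nonneg_left hexp (by positivity)
        _ = Real.exp B * (r ^ (d - 1) * Real.exp (-r)) := by
            rw [Real.exp_sub, Real.exp_neg]
            field_simp

lemma kappaV_pos (k : ℕ) (hk : 1 ≤ k) : 0 < kappaV k := by
  unfold kappaV omegaS
  have hk' : (0:ℝ) < (k:ℝ) := by exact_mod_cast hk
  have h1 : 0 < Real.Gamma ((k:ℝ) / 2) := Real.Gamma_pos_of_pos (by linarith)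
  have h2 : 0 < Real.pi ^ ((k:ℝ) / 2) := Real.rpow_pos_of_pos Real.pi_pos _
  positivity

lemma F_continuous (d : ℕ) (hd : 2 ≤ d) (c κ : ℝ) :
    Continuous (fun r : ℝ => κ ^ (-(((d:ℝ) - 1) / 2)) * Real.sinh (Real.sqrt κ * r) ^ (d - 1) *
      Real.exp (-c * ∫ t in (0:ℝ)..(r / 2), κ ^ (-(((d:ℝ) - 1) / 2)) *
        (Real.cosh (Real.sqrt κ * r) ^ 2 / Real.cosh (Real.sqrt κ * (r - t)) ^ 2 - 1)
          ^ (((d:ℝ) - 1) / 2))) := by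
  have hd2 : (2:ℝ) ≤ (d:ℝ) := by exact_mod_cast hd
  have hp : (0:ℝ) ≤ ((d:ℝ) - 1) / 2 := by linarith
  have hcont_inner : Continuous (Function.uncurry fun (r t : ℝ) =>
      κ ^ (-(((d:ℝ) - 1) / 2)) *
        (Real.cosh (Real.sqrt κ * r) ^ 2 / Real.cosh (Real.sqrt κ * (r - t)) ^ 2 - 1)
          ^ (((d:ℝ) - 1) / 2)) := by
    show Continuous fun q : ℝ × ℝ => κ ^ (-(((d:ℝ) - 1) / 2)) *
        (Real.cosh (Real.sqrt κ * q.1) ^ 2 / Real.cosh (Real.sqrt κ * (q.1 - q.2)) ^ 2 - 1)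
          ^ (((d:ℝ) - 1) / 2)
    apply continuous_const.mul
    apply (Real.continuous_rpow_const hp).comp
    apply Continuous.sub _ continuous_const
    apply Continuous.div
    · exact (Real.continuous_cosh.comp (continuous_const.mul continuous_fst)).pow 2
    · exact (Real.continuous_cosh.comp
        (continuous_const.mul (continuous_fst.sub continuous_snd))).pow 2
    · exact fun q => pow_ne_zero 2 (Real.cosh_pos _).ne'
  have hint : Continuous (fun r : ℝ => ∫ t in (0:ℝ)..(r / 2),
      κ ^ (-(((d:ℝ) - 1) / 2)) *
        (Real.cosh (Real.sqrt κ * r) ^ 2 / Real.cosh (Real.sqrt κ * (r - t)) ^ 2 - 1)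
          ^ (((d:ℝ) - 1) / 2)) :=
    intervalIntegral.continuous_parametric_intervalIntegral_of_continuous hcont_inner
      (continuous_id.div_const 2)
  exact (continuous_const.mul
      ((Real.continuous_sinh.comp (continuous_const.mul continuous_id)).pow (d - 1))).mul
    (Real.continuous_exp.comp (continuous_const.mul hint))

/-- as the curvature parameter `κ → 0⁺`, the expected degree of the origin in
the hyperbolic radial spanning tree converges to the Euclidean expected degree. -/
theorem stmt1 (d : ℕ) (hd : 2 ≤ d) (γ : ℝ) (hγ : 0 < γ) :
    Tendsto
      (fun κ : ℝ =>
        γ * omegaS d *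
          ∫ r in Set.Ioi (0:ℝ),
            κ ^ (-((d : ℝ) - 1) / 2) * Real.sinh (Real.sqrt κ * r) ^ (d - 1) *
              Real.exp (-(2 * γ * kappaV (d - 1)) *
                ∫ t in (0:ℝ)..(r / 2),
                  κ ^ (-((d : ℝ) - 1) / 2) *
                    ((Real.cosh (Real.sqrt κ * r)) ^ 2 /
                        (Real.cosh (Real.sqrt κ * (r - t))) ^ 2 - 1) ^ (((d : ℝ) - 1) / 2)))
      (nhdsWithin 0 (Set.Ioi 0))
      (nhds (γ * omegaS d *
        ∫ r in Set.Ioi (0:ℝ),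
          r ^ (d - 1) * Real.exp (-(2 * γ * kappaV (d - 1) * betaD d) * r ^ d))) := by
  simp only [neg_div]
  set c : ℝ := 2 * γ * kappaV (d - 1) with hc_def
  have hkv : 0 < kappaV (d - 1) := kappaV_pos (d - 1) (by omega)
  have hc : 0 < c := by rw [hc_def]; positivity
  refine Tendsto.const_mul _ ?_
  have key := MeasureTheory.tendsto_integral_filter_of_dominated_convergence
    (μ := volume.restrict (Set.Ioi (0:ℝ)))
    (l := nhdsWithin (0:ℝ) (Set.Ioi 0))
    (F := fun (κ : ℝ) (r : ℝ) =>
      κ ^ (-(((d:ℝ) - 1) / 2)) * Real.sinh (Real.sqrt κ * r) ^ (d - 1) *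
        Real.exp (-c * ∫ t in (0:ℝ)..(r / 2), κ ^ (-(((d:ℝ) - 1) / 2)) *
          (Real.cosh (Real.sqrt κ * r) ^ 2 / Real.cosh (Real.sqrt κ * (r - t)) ^ 2 - 1)
            ^ (((d:ℝ) - 1) / 2)))
    (f := fun r : ℝ => r ^ (d - 1) * Real.exp (-c * (betaD d * r ^ d)))
    (bound := Gbound d c)
    ?_ ?_ ?_ ?_
  · have heq : (∫ r in Set.Ioi (0:ℝ), r ^ (d - 1) * Real.exp (-c * (betaD d * r ^ d)))
        = ∫ r in Set.Ioi (0:ℝ), r ^ (d - 1) * Real.exp (-(c * betaD d) * r ^ d) := by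
      apply integral_congr_ae
      apply Eventually.of_forall
      intro r
      congr 2
      ring
    rw [heq] at key
    exact key
  · exact Eventually.of_forall fun κ => (F_continuous d hd c κ).aestronglyMeasurable
  · filter_upwards [Ioc_mem_nhdsGT_of_mem (Set.mem_Ico.mpr ⟨le_refl (0:ℝ), zero_lt_one⟩)]
      with κ hκ
    rw [ae_restrict_iff' measurableSet_Ioi]
    exact Eventually.of_forall fun r hr => F_le_Gbound d hd c hc κ hκ.1 hκ.2 r hr
  · exact Gbound_integrable d hd c hc
  · rw [ae_restrict_iff' measurableSet_Ioi]
    exact Eventually.of_forall fun r hr => F_tendsto d hd r hr (-c)
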